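/- Let B be a commutative ring and A a commutative B-algebra that is nonzero and finite free as a B-module, and let N : A → B denote the norm (N(φ) is the determinant of the B-linear endomorphism of A given by multiplication by φ). Then for every φ ∈ A and every prime ideal P of B, one has N(φ) ∈ P if and only if there exists a prime ideal Q of A lying over P (i.e. the preimage of Q under the structure map B → A equals P) with φ ∈ Q. -/

import Mathlib

/-- Every element of a finite free algebra divides (the image of) its norm. -/
theorem dvd_algebraMap_norm_aux
    (B A : Type*) [CommRing B] [CommRing A] [Algebra B A]
    [Module.Free B A] [Module.Finite B A] (φ : A) :
    φ ∣ algebraMap B A (Algebra.norm B φ) := by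
  set f : A →ₗ[B] A := LinearMap.mul B A φ with hf
  have h0 : Polynomial.aeval φ f.charpoly = 0 := by
    have h1 : Polynomial.aeval f f.charpoly = 0 := f.aeval_self_charpoly
    have h2 : Polynomial.aeval ((Algebra.lmul B A) φ) f.charpoly
        = (Algebra.lmul B A) (Polynomial.aeval φ f.charpoly) :=
      Polynomial.aeval_algHom_apply (Algebra.lmul B A) φ f.charpoly
    have h3 : ((Algebra.lmul B A) (Polynomial.aeval φ f.charpoly)) 1 = 0 := by
      rw [← h2]
      have : (Algebra.lmul B A) φ = f := rfl
      rw [this, h1]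
      rfl
    simpa using h3
  have hdvd0 : φ ∣ algebraMap B A (f.charpoly.coeff 0) := by
    have := congrArg (Polynomial.aeval φ) f.charpoly.X_mul_divX_add
    rw [h0, map_add, map_mul, Polynomial.aeval_X, Polynomial.aeval_C] at this
    refine ⟨-(Polynomial.aeval φ f.charpoly.divX), ?_⟩
    rw [mul_neg]
    linear_combination this
  have hnorm : Algebra.norm B φ
      = (-1) ^ Module.finrank B A * f.charpoly.coeff 0 := by
    rw [Algebra.norm_apply]
    exact LinearMap.det_eq_sign_charpoly_coeff f
  rw [hnorm, map_mul]
  exact Dvd.dvd.mul_left hdvd0 _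

/-- Let `B` be a commutative ring and `A` a commutative `B`-algebra that is
nonzero and finite free as a `B`-module, and let `N : A → B` be the norm, i.e. `N φ` is the
determinant of the `B`-linear endomorphism of `A` given by multiplication by `φ`.  Then for every
`φ ∈ A` and every prime ideal `P` of `B`, one has `N φ ∈ P` if and only if there exists a prime
ideal `Q` of `A` lying over `P` with `φ ∈ Q`. -/
theorem norm_mem_prime_iff_exists_prime_over
    (B A : Type*) [CommRing B] [CommRing A] [Algebra B A]
    [Nontrivial A] [Module.Free B A] [Module.Finite B A]
    (N : A → B) (hN : ∀ φ : A, N φ = LinearMap.det (LinearMap.mul B A φ))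
    (φ : A) (P : Ideal B) (hP : P.IsPrime) :
    N φ ∈ P ↔
      ∃ Q : Ideal A, Q.IsPrime ∧ Q.comap (algebraMap B A) = P ∧ φ ∈ Q := by
  haveI := hP
  have hNφ : N φ = Algebra.norm B φ := hN φ
  haveI : Nontrivial B := by
    by_contra h
    rw [not_nontrivial_iff_subsingleton] at h
    haveI := Module.subsingleton B A
    exact not_subsingleton A ‹_›
  constructor
  · intro hmem
    have hle : (Ideal.span {φ}).comap (algebraMap B A) ≤ P := by
      intro b hb
      rw [Ideal.mem_comap, Ideal.mem_span_singleton] at hb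
      obtain ⟨a, ha⟩ := hb
      set ι := Module.Free.ChooseBasisIndex B A
      have bs : Module.Basis ι B A := Module.Free.chooseBasis B A
      have hpow : b ^ Fintype.card ι = Algebra.norm B φ * Algebra.norm B a := by
        rw [← map_mul, ← ha, Algebra.norm_algebraMap_of_basis bs]
      have : b ^ Fintype.card ι ∈ P := by
        rw [hpow]
        exact Ideal.mul_mem_right _ _ (hNφ ▸ hmem)
      exact hP.mem_of_pow_mem _ this
    obtain ⟨Q, hQI, hQprime, hQcomap⟩ :=
      Ideal.exists_ideal_over_prime_of_isIntegral P (Ideal.span {φ}) hle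
    exact ⟨Q, hQprime, hQcomap, hQI (Ideal.mem_span_singleton_self φ)⟩
  · rintro ⟨Q, hQprime, hQcomap, hφQ⟩
    obtain ⟨c, hc⟩ := dvd_algebraMap_norm_aux B A φ
    have : algebraMap B A (N φ) ∈ Q := by
      rw [hNφ, hc]
      exact Ideal.mul_mem_right _ _ hφQ
    rw [← hQcomap]
    exact this
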